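/- Let F be the free group of rank two with basis x, y. Then the commutator subgroup F′ of F is freely generated by the elements [x,y]^{xⁱyʲ} = (xⁱyʲ)⁻¹ (x⁻¹y⁻¹xy) (xⁱyʲ), where (i, j) ranges over ℤ × ℤ; that is, the homomorphism from the free group on the index set ℤ × ℤ to F sending the generator indexed by (i, j) to (xⁱyʲ)⁻¹[x,y](xⁱyʲ) is injective, and its image is exactly the commutator subgroup F′. -/

import Mathlib

namespace CSF16

open SemidirectProduct
open scoped commutatorElement

abbrev A := FreeGroup (ℤ × ℤ)
abbrev Z2 := Multiplicative (ℤ × ℤ)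

def act : Z2 →* MulAut A :=
  MonoidHom.mk'
    (fun z => (FreeGroup.freeGroupCongr (Equiv.addRight (Multiplicative.toAdd z)) : MulAut A))
    (by
      intro a b
      have h : Equiv.addRight (Multiplicative.toAdd (a * b)) =
          (Equiv.addRight (Multiplicative.toAdd b)).trans
            (Equiv.addRight (Multiplicative.toAdd a)) := by
        ext p
        · simp [add_assoc]; ring
        · simp [add_assoc]; ring
      rw [h, ← FreeGroup.freeGroupCongr_trans]
      rfl)

@[simp] lemma act_of (z : Z2) (p : ℤ × ℤ) :
    act z (FreeGroup.of p) = FreeGroup.of (p + Multiplicative.toAdd z) := by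
  simp [act, FreeGroup.freeGroupCongr]

abbrev G := A ⋊[act] Z2

abbrev mz (p : ℤ × ℤ) : Z2 := Multiplicative.ofAdd p

@[simp] lemma mz_mul (p q : ℤ × ℤ) : mz p * mz q = mz (p + q) := rfl
@[simp] lemma mz_zpow (p : ℤ × ℤ) (n : ℤ) : (mz p) ^ n = mz (n • p) := rfl
@[simp] lemma mz_inv (p : ℤ × ℤ) : (mz p)⁻¹ = mz (-p) := rfl
@[simp] lemma toAdd_mz (p : ℤ × ℤ) : Multiplicative.toAdd (mz p) = p := rfl

def X : FreeGroup (Fin 2) := FreeGroup.of 0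
def Y : FreeGroup (Fin 2) := FreeGroup.of 1
def K : FreeGroup (Fin 2) := X⁻¹ * Y⁻¹ * X * Y
def c (p : ℤ × ℤ) : FreeGroup (Fin 2) := (X ^ p.1 * Y ^ p.2)⁻¹ * K * (X ^ p.1 * Y ^ p.2)
def Lf : FreeGroup (ℤ × ℤ) →* FreeGroup (Fin 2) := FreeGroup.lift c

def Φ : FreeGroup (Fin 2) →* G :=
  FreeGroup.lift (fun i => if i = 0 then inr (mz (1,0))
    else inl (FreeGroup.of ((0:ℤ),(0:ℤ))) * inr (mz (0,1)))

@[simp] lemma phiX : Φ X = inr (mz (1,0)) := by simp [Φ, X]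
@[simp] lemma phiY : Φ Y = inl (FreeGroup.of ((0:ℤ),(0:ℤ))) * inr (mz (0,1)) := by
  simp [Φ, Y]

lemma conj_inl (g : G) (b : A) :
    g⁻¹ * inl b * g = inl (act g.right⁻¹ (g.left⁻¹ * b * g.left)) := by
  ext <;> simp [mul_assoc]

@[simp] lemma right_phiY_pow (j : ℤ) : ((Φ Y ^ j : G)).right = mz (0, j) := by
  have : ((Φ Y ^ j : G)).right = rightHom (Φ Y ^ j) := rfl
  rw [this, map_zpow]
  simp [rightHom]

def bb : A := (FreeGroup.of ((-1:ℤ),(-1:ℤ)))⁻¹ * FreeGroup.of ((0:ℤ),(-1:ℤ))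

lemma phiK : Φ K = inl bb := by
  ext : 1
  · simp [K, bb, mul_assoc]
  · simp [K]

def w (p : ℤ × ℤ) : A := act (mz (p.1, 0)) ((Φ Y ^ p.2 : G).left)
def s (p : ℤ × ℤ) : A := act (mz p)⁻¹ ((w p)⁻¹ * bb * w p)

lemma phit (p : ℤ × ℤ) : Φ (X ^ p.1 * Y ^ p.2) = ⟨w p, mz p⟩ := by
  rw [map_mul, map_zpow, map_zpow, phiX, ← map_zpow inr]
  ext : 1
  · simp [w]
  · rw [mul_right, right_phiY_pow]
    simp [Prod.ext_iff]

lemma phic (p : ℤ × ℤ) : Φ (c p) = inl (s p) := by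
  have h1 : Φ (c p) = (Φ (X ^ p.1 * Y ^ p.2))⁻¹ * Φ K * Φ (X ^ p.1 * Y ^ p.2) := by
    simp [c, map_mul]
  rw [h1, phiK, phit, conj_inl]
  rfl


def hgen (l : ℤ) : G := inl (FreeGroup.of (-1, -1-l)) * inr (mz (-1, 0))
def C (q : ℤ × ℤ) : A := ((hgen q.2) ^ q.1).left
def χ : A →* A := FreeGroup.lift C

@[simp] lemma right_hgen_pow (l k : ℤ) : ((hgen l)^k).right = mz (-k, 0) := by
  have : ((hgen l)^k).right = rightHom ((hgen l)^k) := rfl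
  rw [this, map_zpow]
  simp [hgen, rightHom, Prod.ext_iff]

lemma C_zero (l : ℤ) : C (0, l) = 1 := by simp [C]

lemma C_succ (k l : ℤ) : C (k+1, l) = C (k, l) * FreeGroup.of (-1-k, -1-l) := by
  show ((hgen l)^(k+1)).left = ((hgen l)^k).left * FreeGroup.of (-1-k, -1-l)
  rw [zpow_add_one, mul_left, right_hgen_pow]
  congr 1
  have h : (hgen l).left = FreeGroup.of (-1, -1-l) := by simp [hgen]
  rw [h, act_of]
  congr 1
  simp [Prod.ext_iff]
  ring

@[simp] lemma chi_of (q : ℤ × ℤ) : χ (FreeGroup.of q) = C q := by simp [χ]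

lemma act_act (a b : Z2) (u : A) : act a (act b u) = act (a * b) u := by
  rw [map_mul]
  rfl

lemma chi_w (j : ℤ) : ∀ m : ℤ, χ (act (mz (0, m)) ((Φ Y ^ j : G).left)) = 1 := by
  induction j using Int.induction_on with
  | zero => intro m; simp
  | succ n ih =>
    intro m
    have h1 : (Φ Y ^ ((n : ℤ) + 1) : G) = Φ Y ^ (n : ℤ) * Φ Y := by
      rw [zpow_add_one]
    rw [h1, mul_left, right_phiY_pow, map_mul, map_mul]
    have h2 : (Φ Y).left = FreeGroup.of ((0:ℤ), (0:ℤ)) := by simp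
    rw [h2, act_act, act_of, ih m]
    simp [C]
  | pred n ih =>
    intro m
    have h1 : (Φ Y ^ (-(n : ℤ) - 1) : G) = Φ Y ^ (-(n : ℤ)) * (Φ Y)⁻¹ := by
      rw [← zpow_sub_one]
    have h2 : ((Φ Y)⁻¹ : G).left = (FreeGroup.of ((0:ℤ), (-1:ℤ)))⁻¹ := by
      rw [inv_left]
      have h3 : (Φ Y).left = FreeGroup.of ((0:ℤ), (0:ℤ)) := by simp
      have h4 : (Φ Y).right = mz (0, 1) := by simp [rightHom]
      rw [h3, h4]
      simp [Prod.ext_iff]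
    rw [h1, mul_left, right_phiY_pow, map_mul, map_mul, h2, act_act, ih m]
    simp [C]

lemma chi_s (p : ℤ × ℤ) : χ (s p) = FreeGroup.of p := by
  obtain ⟨i, j⟩ := p
  have e1 : ((mz (i,j))⁻¹ : Z2) = mz (-i, -j) := rfl
  have hw : act (mz (-i,-j)) (w (i,j)) = act (mz (0, -j)) ((Φ Y ^ j : G).left) := by
    show act (mz (-i,-j)) (act (mz (i, 0)) ((Φ Y ^ ((i,j) : ℤ × ℤ).2 : G).left)) = _
    rw [act_act]
    norm_num
  have hb : act (mz (-i,-j)) bb =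
      (FreeGroup.of (-1-i, -1-j))⁻¹ * FreeGroup.of (-i, -1-j) := by
    rw [bb, map_mul, map_inv, act_of, act_of]
    norm_num [Prod.ext_iff, sub_eq_add_neg, add_comm]
  have hc : C (-i, -1-j) = C (-1-i, -1-j) * FreeGroup.of (i, j) := by
    have h := C_succ (-1-i) (-1-j)
    rw [show (-1 - i + 1 : ℤ) = -i by ring] at h
    rw [h]
    congr 2 <;> ring
  show χ (act ((mz (i,j))⁻¹) ((w (i,j))⁻¹ * bb * w (i,j))) = _
  rw [e1]
  simp only [map_mul, map_inv]
  rw [hw, hb, chi_w j (-j)]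
  simp only [map_mul, map_inv, chi_of]
  rw [hc]
  group

def Nh : FreeGroup (ℤ × ℤ) →* A := FreeGroup.lift s

lemma comp1 : Φ.comp Lf = (inl : A →* G).comp Nh := by
  apply FreeGroup.ext_hom
  intro p
  simp [Lf, Nh, phic]

lemma comp2 : χ.comp Nh = MonoidHom.id _ := by
  apply FreeGroup.ext_hom
  intro p
  simp [Nh, chi_s]

lemma Lf_injective : Function.Injective Lf := by
  intro u v h
  have h1 : (inl (Nh u) : G) = inl (Nh v) := by
    have hu := DFunLike.congr_fun comp1 u
    have hv := DFunLike.congr_fun comp1 v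
    simp only [MonoidHom.comp_apply] at hu hv
    rw [← hu, ← hv, h]
  have h2 : Nh u = Nh v := inl_injective h1
  have hu := DFunLike.congr_fun comp2 u
  have hv := DFunLike.congr_fun comp2 v
  simp only [MonoidHom.comp_apply, MonoidHom.id_apply] at hu hv
  rw [← hu, ← hv, h2]


abbrev R : Subgroup (FreeGroup (Fin 2)) := Lf.range

lemma cmem (p : ℤ × ℤ) : c p ∈ R := ⟨FreeGroup.of p, by simp [Lf]⟩

def d (j : ℤ) : FreeGroup (Fin 2) := Y ^ (-j) * X * Y ^ j * X⁻¹
def e (j : ℤ) : FreeGroup (Fin 2) := Y ^ (-j) * X⁻¹ * Y ^ j * X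

lemma idd (j : ℤ) : d (j + 1) = c (-1, j) * d j := by
  simp only [d, c, K]
  group

lemma ide (j : ℤ) : e (j + 1) = (c (0, j))⁻¹ * e j := by
  simp only [e, c, K]
  group

lemma dmem (j : ℤ) : d j ∈ R := by
  induction j using Int.induction_on with
  | zero => have : d 0 = 1 := by simp only [d]; group
            rw [this]; exact one_mem R
  | succ n ih => rw [idd]; exact mul_mem (cmem _) ih
  | pred n ih =>
    have h := idd (-(n:ℤ) - 1)
    rw [sub_add_cancel] at h
    have : d (-(n:ℤ) - 1) = (c (-1, -(n:ℤ) - 1))⁻¹ * d (-(n:ℤ)) := by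
      rw [h]; group
    rw [this]; exact mul_mem (inv_mem (cmem _)) ih

lemma emem (j : ℤ) : e j ∈ R := by
  induction j using Int.induction_on with
  | zero => have : e 0 = 1 := by simp only [e]; group
            rw [this]; exact one_mem R
  | succ n ih => rw [ide]; exact mul_mem (inv_mem (cmem _)) ih
  | pred n ih =>
    have h := ide (-(n:ℤ) - 1)
    rw [sub_add_cancel] at h
    have : e (-(n:ℤ) - 1) = c (0, -(n:ℤ) - 1) * e (-(n:ℤ)) := by
      rw [h]; group
    rw [this]; exact mul_mem (cmem _) ih

lemma idY (p : ℤ × ℤ) : Y * c p * Y⁻¹ = c (p.1, p.2 - 1) := by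
  simp only [c, K]
  group

lemma idY' (p : ℤ × ℤ) : Y⁻¹ * c p * Y = c (p.1, p.2 + 1) := by
  simp only [c, K]
  group

lemma idX (p : ℤ × ℤ) : X * c p * X⁻¹ = (d p.2)⁻¹ * c (p.1 - 1, p.2) * d p.2 := by
  simp only [c, K, d]
  group

lemma idX' (p : ℤ × ℤ) : X⁻¹ * c p * X = (e p.2)⁻¹ * c (p.1 + 1, p.2) * e p.2 := by
  simp only [c, K, e]
  group

lemma conj_stab (t : FreeGroup (Fin 2)) (ht : ∀ p, t * c p * t⁻¹ ∈ R) :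
    ∀ n ∈ R, t * n * t⁻¹ ∈ R := by
  intro n hn
  rw [show (R : Subgroup (FreeGroup (Fin 2))) = Lf.range from rfl,
    Lf, FreeGroup.range_lift_eq_closure] at hn
  induction hn using Subgroup.closure_induction with
  | mem g hg => obtain ⟨p, rfl⟩ := hg; exact ht p
  | one => simpa using one_mem R
  | mul a b _ _ iha ihb =>
    have : t * (a * b) * t⁻¹ = (t * a * t⁻¹) * (t * b * t⁻¹) := by group
    rw [this]; exact mul_mem iha ihb
  | inv a _ iha =>
    have : t * a⁻¹ * t⁻¹ = (t * a * t⁻¹)⁻¹ := by group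
    rw [this]; exact inv_mem iha

lemma normalR : R.Normal := by
  have key : ∀ g : FreeGroup (Fin 2), ∀ n ∈ R, g * n * g⁻¹ ∈ R ∧ g⁻¹ * n * g ∈ R := by
    intro g
    induction g using FreeGroup.induction_on with
    | C1 =>
      intro n hn
      constructor <;> simpa using hn
    | of i =>
      fin_cases i
      · intro n hn
        constructor
        · exact conj_stab X (fun p => by
            rw [idX p]
            exact mul_mem (mul_mem (inv_mem (dmem _)) (cmem _)) (dmem _)) n hn
        · have := conj_stab X⁻¹ (fun p => by
            rw [show X⁻¹ * c p * X⁻¹⁻¹ = X⁻¹ * c p * X by group, idX' p]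
            exact mul_mem (mul_mem (inv_mem (emem _)) (cmem _)) (emem _)) n hn
          simpa [X] using this
      · intro n hn
        constructor
        · exact conj_stab Y (fun p => by
            rw [idY p]; exact cmem _) n hn
        · have := conj_stab Y⁻¹ (fun p => by
            rw [show Y⁻¹ * c p * Y⁻¹⁻¹ = Y⁻¹ * c p * Y by group, idY' p]
            exact cmem _) n hn
          simpa [Y] using this
    | inv_of i ih =>
      intro n hn
      refine ⟨(ih n hn).2, ?_⟩
      simpa using (ih n hn).1
    | mul a b iha ihb =>
      intro n hn
      constructor
      · have h1 := (ihb n hn).1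
        have h2 := (iha _ h1).1
        have : a * b * n * (a * b)⁻¹ = a * (b * n * b⁻¹) * a⁻¹ := by group
        rw [this]; exact h2
      · have h1 := (iha n hn).2
        have h2 := (ihb _ h1).2
        have : (a * b)⁻¹ * n * (a * b) = b⁻¹ * (a⁻¹ * n * a) * b := by group
        rw [this]; exact h2
  exact ⟨fun n hn g => (key g n hn).1⟩


lemma hKmem : K ∈ R := by
  have h := cmem (0, 0)
  simpa [c] using h

lemma commutator_le_R : commutator (FreeGroup (Fin 2)) ≤ R := by
  haveI := normalR
  rw [commutator_def, Subgroup.commutator_le]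
  intro g _ h _
  have hcomm : ∀ a : FreeGroup (Fin 2),
      Commute ((a : FreeGroup (Fin 2) ⧸ R)) ((g : FreeGroup (Fin 2) ⧸ R)) → True := fun _ _ => trivial
  -- commutativity of the quotient
  have hXY : Commute ((X : FreeGroup (Fin 2) ⧸ R)) ((Y : FreeGroup (Fin 2) ⧸ R)) := by
    have h1 : ((K : FreeGroup (Fin 2) ⧸ R)) = 1 := (QuotientGroup.eq_one_iff _).mpr hKmem
    have h2 : ((K : FreeGroup (Fin 2) ⧸ R)) =
        ⁅((X : FreeGroup (Fin 2) ⧸ R))⁻¹, ((Y : FreeGroup (Fin 2) ⧸ R))⁻¹⁆ := by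
      show ((X⁻¹ * Y⁻¹ * X * Y : FreeGroup (Fin 2)) : FreeGroup (Fin 2) ⧸ R) = _
      rw [commutatorElement_def]
      simp only [QuotientGroup.mk_mul, QuotientGroup.mk_inv, inv_inv]
    rw [h2] at h1
    have := commutatorElement_eq_one_iff_commute.mp h1
    simpa using this.inv_inv
  have hgen : ∀ a : FreeGroup (Fin 2),
      Commute ((X : FreeGroup (Fin 2) ⧸ R)) ((a : FreeGroup (Fin 2) ⧸ R)) ∧
      Commute ((Y : FreeGroup (Fin 2) ⧸ R)) ((a : FreeGroup (Fin 2) ⧸ R)) := by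
    intro a
    induction a using FreeGroup.induction_on with
    | C1 => constructor <;> simp
    | of i =>
      fin_cases i
      · exact ⟨Commute.refl _, hXY.symm⟩
      · exact ⟨hXY, Commute.refl _⟩
    | inv_of i ih =>
      refine ⟨?_, ?_⟩
      · have := ih.1.inv_right
        simpa using this
      · have := ih.2.inv_right
        simpa using this
    | mul a b iha ihb =>
      refine ⟨?_, ?_⟩
      · have := iha.1.mul_right ihb.1
        simpa using this
      · have := iha.2.mul_right ihb.2
        simpa using this
  have hall : ∀ a b : FreeGroup (Fin 2),
      Commute ((a : FreeGroup (Fin 2) ⧸ R)) ((b : FreeGroup (Fin 2) ⧸ R)) := by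
    intro a
    induction a using FreeGroup.induction_on with
    | C1 => intro b; simp [Commute.one_left]
    | of i =>
      intro b
      fin_cases i
      · exact (hgen b).1
      · exact (hgen b).2
    | inv_of i ih =>
      intro b
      have := (ih b).inv_left
      simpa using this
    | mul a b iha ihb =>
      intro b'
      have := (iha b').mul_left (ihb b')
      simpa using this
  rw [← QuotientGroup.eq_one_iff (N := R)]
  push_cast [map_commutatorElement]
  exact commutatorElement_eq_one_iff_commute.mpr (hall g h)

lemma R_le_commutator : R ≤ commutator (FreeGroup (Fin 2)) := by
  rw [show (R : Subgroup (FreeGroup (Fin 2))) = Lf.range from rfl, Lf]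
  apply FreeGroup.range_lift_le
  rintro - ⟨p, rfl⟩
  have hK : K ∈ commutator (FreeGroup (Fin 2)) := by
    have h := Subgroup.commutator_mem_commutator (Subgroup.mem_top (X⁻¹)) (Subgroup.mem_top (Y⁻¹))
    rw [commutator_def]
    have he : (⁅X⁻¹, Y⁻¹⁆ : FreeGroup (Fin 2)) = K := by
      rw [commutatorElement_def, K]
      group
    rwa [he] at h
  haveI : (commutator (FreeGroup (Fin 2))).Normal := Subgroup.commutator_normal ⊤ ⊤
  have := this.conj_mem K hK (X ^ p.1 * Y ^ p.2)⁻¹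
  simpa [c] using this

end CSF16

/-- Let `F` be the free group of rank two on `x, y` (here `x = FreeGroup.of 0`,
`y = FreeGroup.of 1`). The commutator subgroup `F′` is freely generated by the elements
`[x,y]^{xⁱyʲ} = (xⁱyʲ)⁻¹(x⁻¹y⁻¹xy)(xⁱyʲ)` for `(i, j) ∈ ℤ × ℤ`: the homomorphism from the
free group on `ℤ × ℤ` to `F` sending the generator indexed by `(i, j)` to
`(xⁱyʲ)⁻¹[x,y](xⁱyʲ)` is injective and its range is exactly the commutator subgroup `F′`. -/
theorem commutator_subgroup_freely_generated_by_conjugates :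
    Function.Injective
      (FreeGroup.lift (fun p : ℤ × ℤ =>
        ((FreeGroup.of 0 : FreeGroup (Fin 2)) ^ p.1 * FreeGroup.of 1 ^ p.2)⁻¹ *
          ((FreeGroup.of 0)⁻¹ * (FreeGroup.of 1)⁻¹ * FreeGroup.of 0 * FreeGroup.of 1) *
          (FreeGroup.of 0 ^ p.1 * FreeGroup.of 1 ^ p.2))) ∧
    MonoidHom.range
      (FreeGroup.lift (fun p : ℤ × ℤ =>
        ((FreeGroup.of 0 : FreeGroup (Fin 2)) ^ p.1 * FreeGroup.of 1 ^ p.2)⁻¹ *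
          ((FreeGroup.of 0)⁻¹ * (FreeGroup.of 1)⁻¹ * FreeGroup.of 0 * FreeGroup.of 1) *
          (FreeGroup.of 0 ^ p.1 * FreeGroup.of 1 ^ p.2))) =
      commutator (FreeGroup (Fin 2)) := by
  have hfun : (fun p : ℤ × ℤ =>
        ((FreeGroup.of 0 : FreeGroup (Fin 2)) ^ p.1 * FreeGroup.of 1 ^ p.2)⁻¹ *
          ((FreeGroup.of 0)⁻¹ * (FreeGroup.of 1)⁻¹ * FreeGroup.of 0 * FreeGroup.of 1) *
          (FreeGroup.of 0 ^ p.1 * FreeGroup.of 1 ^ p.2)) = CSF16.c := rfl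
  rw [hfun]
  exact ⟨CSF16.Lf_injective, le_antisymm CSF16.R_le_commutator CSF16.commutator_le_R⟩
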